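/- Every non-recursive context-free game that has a dominant one-pass strategy has a strongly regular dominant one-pass strategy. -/

import Mathlib

namespace CFG

/-- Juliet's two kinds of moves. -/
inductive JMove : Type
  | call : JMove
  | read : JMove
deriving DecidableEq

/-- The extended alphabet Σ̂: `Sum.inl a` is the plain symbol `a`,
`Sum.inr a` is the "called" copy `â`. -/
abbrev HSym (A : Type) : Type := A ⊕ A

/-- The homomorphism ♮ deleting called symbols. -/
def flat {A : Type} (α : List (HSym A)) : List A :=
  α.filterMap (fun x => match x with | Sum.inl a => some a | Sum.inr _ => none)

/-- A context-free game: a (minimal) DFA `T` over `A` with finite state set `Q`,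
and a replacement relation `R` with nonempty replacement words and regular
replacement languages. -/
structure CFGame (A : Type) where
  Q : Type
  fintypeQ : Fintype Q
  T : DFA A Q
  minimal_reachable : ∀ q : Q, ∃ w : List A, T.evalFrom T.start w = q
  minimal_distinguishable :
    ∀ q q' : Q, (∀ w : List A, T.evalFrom q w ∈ T.accept ↔ T.evalFrom q' w ∈ T.accept) → q = q'
  R : A → List A → Prop
  R_ne : ∀ a v, R a v → v ≠ []
  R_regular : ∀ a, Language.IsRegular {v : List A | R a v}

variable {A : Type}

/-- `a` is a function symbol (its replacement language is nonempty). -/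
def CFGame.Fn (G : CFGame A) (a : A) : Prop := ∃ v, G.R a v

/-- One-pass strategies of Juliet (values at non-function symbols are irrelevant). -/
abbrev JStrat (A : Type) : Type := List (HSym A) → A → JMove

/-- Strategies of Romeo (values at non-function symbols are irrelevant). -/
abbrev RStrat (A : Type) : Type := List (HSym A) → A → List A

/-- Validity of a Romeo strategy: replacement words belong to the replacement language. -/
def CFGame.RValid (G : CFGame A) (τ : RStrat A) : Prop :=
  ∀ (α : List (HSym A)) (a : A), G.Fn a → G.R a (τ α a)

/-- Configurations, instrumented for depth bookkeeping: a history string, the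
remaining string where every symbol is annotated with its call-nesting level,
and the maximal nesting depth of the `Call` moves played so far. -/
abbrev Config (A : Type) : Type := List (HSym A) × List (A × ℕ) × ℕ

/-- One step of a play: Juliet reads or calls the current symbol according to `σ`
(a call is only possible at a function symbol); a call is answered by `τ`. -/
noncomputable def CFGame.step (G : CFGame A) (σ : JStrat A) (τ : RStrat A) :
    Config A → Config A :=
  fun c =>
    match c with
    | (α, [], d) => (α, [], d)
    | (α, (a, k) :: v, d) =>
      letI := Classical.propDecidable (G.Fn a ∧ σ α a = JMove.call)
      if G.Fn a ∧ σ α a = JMove.call then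
        (α ++ [Sum.inr a], (τ α a).map (fun b => (b, k + 1)) ++ v, max d (k + 1))
      else (α ++ [Sum.inl a], v, d)

/-- The play of `σ` against `τ` on input word `w`, as the sequence of its
configurations (the configuration stays fixed once the remaining string is empty). -/
noncomputable def CFGame.play (G : CFGame A) (σ : JStrat A) (τ : RStrat A)
    (w : List A) (n : ℕ) : Config A :=
  (G.step σ τ)^[n] ([], w.map (fun a => (a, 0)), 0)

/-- `σ` wins on `w`: against every (valid) Romeo strategy, the play on `w` is
finite and its final string belongs to the target language. -/
def CFGame.WinsOn (G : CFGame A) (σ : JStrat A) (w : List A) : Prop :=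
  ∀ τ : RStrat A, G.RValid τ →
    ∃ n : ℕ, (G.play σ τ w n).2.1 = [] ∧
      G.T.evalFrom G.T.start (flat (G.play σ τ w n).1) ∈ G.T.accept

/-- The winning set `W(σ)`. -/
def CFGame.W (G : CFGame A) (σ : JStrat A) : Set (List A) := {w | G.WinsOn σ w}

/-- `σ` is terminating: every play of `σ` is finite. -/
def CFGame.Terminating (G : CFGame A) (σ : JStrat A) : Prop :=
  ∀ τ : RStrat A, G.RValid τ → ∀ w : List A, ∃ n : ℕ, (G.play σ τ w n).2.1 = []

/-- `σ` is dominant: it dominates every one-pass strategy. -/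
def CFGame.Dominant (G : CFGame A) (σ : JStrat A) : Prop :=
  ∀ σ' : JStrat A, G.W σ' ⊆ G.W σ

/-- `σ` is undominated: no one-pass strategy strictly dominates it. -/
def CFGame.Undominated (G : CFGame A) (σ : JStrat A) : Prop :=
  ¬ ∃ σ' : JStrat A, G.W σ ⊂ G.W σ'

/-- `σ` is forgetful: its decisions only depend on `♮α` and the current symbol. -/
def CFGame.Forgetful (G : CFGame A) (σ : JStrat A) : Prop :=
  ∀ (α β : List (HSym A)) (a : A), G.Fn a → flat α = flat β → σ α a = σ β a

/-- `σ` is regular: the language `{αa : σ(α,a) = Call}` over Σ̂ is regular. -/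
def CFGame.RegularStrat (G : CFGame A) (σ : JStrat A) : Prop :=
  Language.IsRegular
    {x : List (HSym A) | ∃ (α : List (HSym A)) (a : A),
      G.Fn a ∧ σ α a = JMove.call ∧ x = α ++ [Sum.inl a]}

/-- One step of a strategy automaton of a strongly regular strategy, on the state
set `Q ∪ {Call}` (`none` is the absorbing state `Call`). -/
def optStep {Q : Type} (δA : Q → A → Option Q) (o : Option Q) (a : A) : Option Q :=
  o.bind (fun q => δA q a)

/-- `σ` is strongly regular: given by an automaton obtained from `T` by rerouting
some transitions to a new accepting state `Call`; Juliet plays `Call` on `(α,a)`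
iff the automaton maps `♮α·a` to `Call`. -/
def CFGame.StronglyRegular (G : CFGame A) (σ : JStrat A) : Prop :=
  ∃ δA : G.Q → A → Option G.Q,
    (∀ q a, δA q a = some (G.T.step q a) ∨ δA q a = none) ∧
    ∀ (α : List (HSym A)) (a : A), G.Fn a →
      (σ α a = JMove.call ↔
        List.foldl (optStep δA) (some G.T.start) (flat α ++ [a]) = none)

/-- Shortlex (strict) order on words. -/
def shortLex [LinearOrder A] (v w : List A) : Prop :=
  v.length < w.length ∨ (v.length = w.length ∧ List.Lex (· < ·) v w)

/-- `V <_sl W` for sets of words: the shortlex-least word of the symmetric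
difference belongs to `W`. -/
def slLT [LinearOrder A] (V W : Set (List A)) : Prop :=
  ∃ w : List A, w ∈ W ∧ w ∉ V ∧ ∀ v : List A, shortLex v w → (v ∈ V ↔ v ∈ W)

/-- `V ≤_sl W` for sets of words. -/
def slLE [LinearOrder A] (V W : Set (List A)) : Prop := V = W ∨ slLT V W

/-- `σ` is weakly dominant: `W(σ') ≤_sl W(σ)` for every one-pass strategy `σ'`. -/
def CFGame.WeaklyDominant [LinearOrder A] (G : CFGame A) (σ : JStrat A) : Prop :=
  ∀ σ' : JStrat A, slLE (G.W σ') (G.W σ)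

/-- The bounded depth property. -/
def CFGame.BoundedDepthProperty (G : CFGame A) : Prop :=
  ∃ B : ℕ → ℕ, ∀ σ : JStrat A, ∀ k : ℕ, ∃ σk : JStrat A,
    ∀ w ∈ G.W σ, w.length ≤ k →
      G.WinsOn σk w ∧
      ∀ τ : RStrat A, G.RValid τ → ∀ n : ℕ, (G.play σk τ w n).2.2 ≤ B w.length

/-- Prefix-freeness of all replacement languages. -/
def CFGame.PrefixFree (G : CFGame A) : Prop :=
  ∀ (a : A) (u v : List A), G.R a u → G.R a v → u <+: v → u = v

/-- Non-recursiveness: no function symbol can be derived from itself. -/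
def CFGame.NonRecursive (G : CFGame A) : Prop :=
  ¬ ∃ (n : ℕ) (f : ℕ → A), 1 ≤ n ∧ f 0 = f n ∧ (∀ i ≤ n, G.Fn (f i)) ∧
    ∀ k < n, ∃ v : List A, G.R (f k) v ∧ f (k + 1) ∈ v

/-- `σ` is almost undominated: only finitely many words are lost by `σ` but won
by some strategy dominating `σ`. -/
def CFGame.AlmostUndominated (G : CFGame A) (σ : JStrat A) : Prop :=
  Set.Finite {w : List A | ¬ G.WinsOn σ w ∧
    ∃ σ' : JStrat A, G.W σ ⊆ G.W σ' ∧ G.WinsOn σ' w}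

/-- Convergence of a sequence of one-pass strategies. -/
def Converges (G : CFGame A) (σs : ℕ → JStrat A) (σ : JStrat A) : Prop :=
  ∀ n : ℕ, ∃ k0 : ℕ, ∀ k ≥ k0, ∀ α : List (HSym A), α.length ≤ n →
    ∀ a : A, G.Fn a → σ α a = σs k α a

/-- The one-pass strategy defined by a DFA `M` over Σ̂ (a strategy automaton):
play `Call` on `(α,a)` iff `M` accepts `α·a`. -/
noncomputable def autoStrat {S : Type} (M : DFA (HSym A) S) : JStrat A :=
  fun α a =>
    letI := Classical.propDecidable (M.eval (α ++ [Sum.inl a]) ∈ M.accept)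
    if M.eval (α ++ [Sum.inl a]) ∈ M.accept then JMove.call else JMove.read

/-- `States(q; w, σ)`: the `T`-states `δ*(q, ♮α)` over final history strings `α`
of plays of `σ` on `w`. -/
def CFGame.StatesOf (G : CFGame A) (σ : JStrat A) (q : G.Q) (w : List A) : Set G.Q :=
  {q' | ∃ τ : RStrat A, G.RValid τ ∧ ∃ n : ℕ,
    (G.play σ τ w n).2.1 = [] ∧ G.T.evalFrom q (flat (G.play σ τ w n).1) = q'}

/-- `(p, a, S)` is an effect triple of `σ`. -/
def CFGame.IsEffectTriple (G : CFGame A) (σ : JStrat A) (t : G.Q × A × Set G.Q) : Prop :=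
  G.StatesOf σ t.1 [t.2.1] ⊆ t.2.2

/-- An effect triple is trivial if `δ(p,a) ∈ S`. -/
def CFGame.TrivialTriple (G : CFGame A) (t : G.Q × A × Set G.Q) : Prop :=
  G.T.step t.1 t.2.1 ∈ t.2.2

/-- The substrategy `σ^α`. -/
def subStrat (σ : JStrat A) (α : List (HSym A)) : JStrat A :=
  fun β a => σ (α ++ β) a

/-- The effect set `E(σ)`: all effect triples of all substrategies of `σ`. -/
def CFGame.EffectSet (G : CFGame A) (σ : JStrat A) : Set (G.Q × A × Set G.Q) :=
  {t | ∃ α : List (HSym A), G.IsEffectTriple (subStrat σ α) t}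

/-- The transition relation of the NFA `N_E` associated with a set `E` of effect
triples (state set `P(Q)`, initial state `{s}`, accepting states the subsets of `F`). -/
def CFGame.NEStep (G : CFGame A) (E : Set (G.Q × A × Set G.Q))
    (S : Set G.Q) (a : A) (S' : Set G.Q) : Prop :=
  ∀ p ∈ S, ∃ S'' : Set G.Q, S'' ⊆ S' ∧ (p, a, S'') ∈ E

/-- A strategy for the online word problem `OnlineNFA(N_E)`. -/
def CFGame.NEOnlineStrat (G : CFGame A) (E : Set (G.Q × A × Set G.Q))
    (ρ : List A → Set G.Q) : Prop :=
  ρ [] = {G.T.start} ∧ ∀ (w : List A) (a : A), G.NEStep E (ρ w) a (ρ (w ++ [a]))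

/-- The winning set of a strategy for `OnlineNFA(N_E)`. -/
def CFGame.NEWins (G : CFGame A) (ρ : List A → Set G.Q) : Set (List A) :=
  {w | ρ w ⊆ G.T.accept}

/-- A strategy automaton `M` is `(p,a,St)`-inducing. -/
def CFGame.Inducing (G : CFGame A) {S : Type} (M : DFA (HSym A) S)
    (p : G.Q) (a : A) (St : Set G.Q) : Prop :=
  G.Terminating (autoStrat M) ∧ G.Fn a ∧
  (∀ u : List A, G.R a u → G.StatesOf (autoStrat M) p u ⊆ St) ∧
  ∃ QA : G.Q → Set S,
    (∀ q ∈ St, ∀ q' ∈ St, q ≠ q' → Disjoint (QA q) (QA q')) ∧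
    ∀ u : List A, G.R a u → ∀ τ : RStrat A, G.RValid τ → ∀ n : ℕ,
      (G.play (autoStrat M) τ u n).2.1 = [] →
      ((∀ q ∈ St,
          (M.eval (G.play (autoStrat M) τ u n).1 ∈ QA q ↔
            G.T.evalFrom p (flat (G.play (autoStrat M) τ u n).1) = q)) ∧
        ∀ β : List (HSym A), β <+: (G.play (autoStrat M) τ u n).1 →
          β ≠ (G.play (autoStrat M) τ u n).1 → ∀ r ∈ St, M.eval β ∉ QA r)


/-! ### Auxiliary development for statement5 -/

section Aux

variable {A : Type}

open Classical in
/-- Erased (annotation-free) step of a play. -/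
noncomputable def estep (G : CFGame A) (σ : JStrat A) (τ : RStrat A) :
    List (HSym A) × List A → List (HSym A) × List A :=
  fun c =>
    match c with
    | (α, []) => (α, [])
    | (α, a :: v) =>
      if G.Fn a ∧ σ α a = JMove.call then (α ++ [Sum.inr a], τ α a ++ v)
      else (α ++ [Sum.inl a], v)

lemma estep_nil (G : CFGame A) (σ : JStrat A) (τ : RStrat A) (α : List (HSym A)) :
    estep G σ τ (α, []) = (α, []) := rfl

lemma estep_call (G : CFGame A) (σ : JStrat A) (τ : RStrat A) (α : List (HSym A))
    (a : A) (v : List A) (h : G.Fn a ∧ σ α a = JMove.call) :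
    estep G σ τ (α, a :: v) = (α ++ [Sum.inr a], τ α a ++ v) := by
  simp [estep, if_pos h]

lemma estep_read (G : CFGame A) (σ : JStrat A) (τ : RStrat A) (α : List (HSym A))
    (a : A) (v : List A) (h : ¬ (G.Fn a ∧ σ α a = JMove.call)) :
    estep G σ τ (α, a :: v) = (α ++ [Sum.inl a], v) := by
  simp only [estep]
  rw [if_neg h]

/-- The erased play. -/
noncomputable def eplay (G : CFGame A) (σ : JStrat A) (τ : RStrat A)
    (w : List A) (n : ℕ) : List (HSym A) × List A :=
  (estep G σ τ)^[n] ([], w)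

/-- Erasure commutes with the play. -/
lemma erase_play (G : CFGame A) (σ : JStrat A) (τ : RStrat A) (w : List A) (n : ℕ) :
    (G.play σ τ w n).1 = (eplay G σ τ w n).1 ∧
      (G.play σ τ w n).2.1.map Prod.fst = (eplay G σ τ w n).2 := by
  induction n with
  | zero => simp [CFGame.play, eplay, Function.comp_def]
  | succ n ih =>
    have h1 : G.play σ τ w (n+1) = G.step σ τ (G.play σ τ w n) := by
      simp [CFGame.play, Function.iterate_succ_apply']
    have h2 : eplay G σ τ w (n+1) = estep G σ τ (eplay G σ τ w n) := by
      simp [eplay, Function.iterate_succ_apply']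
    rw [h1, h2]
    obtain ⟨ih1, ih2⟩ := ih
    rcases hc : (G.play σ τ w n).2.1 with _ | ⟨⟨a, k⟩, v⟩
    · have : (eplay G σ τ w n).2 = [] := by rw [← ih2, hc]; rfl
      rcases hp : G.play σ τ w n with ⟨α, rem, d⟩
      rcases he : eplay G σ τ w n with ⟨β, reme⟩
      rw [hp] at hc ih1 ih2; rw [he] at this ih1 ih2
      simp at hc this ih1 ih2
      subst hc this
      simp [CFGame.step, estep, ih1, ih2]
    · have : (eplay G σ τ w n).2 = a :: v.map Prod.fst := by rw [← ih2, hc]; rfl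
      rcases hp : G.play σ τ w n with ⟨α, rem, d⟩
      rcases he : eplay G σ τ w n with ⟨β, reme⟩
      rw [hp] at hc ih1 ih2; rw [he] at this ih1 ih2
      simp only at hc this ih1 ih2
      subst hc this ih1
      by_cases h : G.Fn a ∧ σ α a = JMove.call
      · simp [CFGame.step, if_pos h, estep_call _ _ _ _ _ _ h, Function.comp_def]
      · simp [CFGame.step, if_neg h, estep_read _ _ _ _ _ _ h]

/-- Winning the remaining word `w` with acceptance evaluated from state `q`. -/
def EWins (G : CFGame A) (q : G.Q) (σ : JStrat A) (w : List A) : Prop :=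
  ∀ τ : RStrat A, G.RValid τ → ∃ n : ℕ,
    (eplay G σ τ w n).2 = [] ∧ G.T.evalFrom q (flat (eplay G σ τ w n).1) ∈ G.T.accept

/-- Winnability of remaining word `w` from state `q`. -/
def EWin (G : CFGame A) (q : G.Q) (w : List A) : Prop := ∃ σ : JStrat A, EWins G q σ w

lemma winsOn_iff_eWins (G : CFGame A) (σ : JStrat A) (w : List A) :
    G.WinsOn σ w ↔ EWins G G.T.start σ w := by
  unfold CFGame.WinsOn EWins
  refine forall_congr' fun τ => forall_congr' fun hτ => exists_congr fun n => ?_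
  obtain ⟨h1, h2⟩ := erase_play G σ τ w n
  rw [h1, ← h2]
  simp

end Aux

section Aux2

variable {A : Type}

/-- Shift a Romeo strategy by a history prefix. -/
def shiftR (α₀ : List (HSym A)) (τ : RStrat A) : RStrat A := fun β a => τ (α₀ ++ β) a

lemma shiftR_valid (G : CFGame A) (α₀ : List (HSym A)) (τ : RStrat A)
    (hτ : G.RValid τ) : G.RValid (shiftR α₀ τ) :=
  fun β a ha => hτ (α₀ ++ β) a ha

/-- Translation lemma: a play from a config with history `α₀` is the shifted play
of the substrategy. -/
lemma eplay_shift (G : CFGame A) (σ : JStrat A) (τ : RStrat A) (α₀ : List (HSym A)) :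
    ∀ (n : ℕ) (β : List (HSym A)) (r : List A),
      (estep G σ τ)^[n] (α₀ ++ β, r) =
        (α₀ ++ ((estep G (subStrat σ α₀) (shiftR α₀ τ))^[n] (β, r)).1,
          ((estep G (subStrat σ α₀) (shiftR α₀ τ))^[n] (β, r)).2) := by
  intro n
  induction n with
  | zero => intro β r; simp
  | succ n ih =>
    intro β r
    rw [Function.iterate_succ_apply, Function.iterate_succ_apply]
    rcases r with _ | ⟨a, v⟩
    · rw [estep_nil, estep_nil, ih]
    · by_cases h : G.Fn a ∧ σ (α₀ ++ β) a = JMove.call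
      · have h' : G.Fn a ∧ subStrat σ α₀ β a = JMove.call := h
        rw [estep_call _ _ _ _ _ _ h, estep_call _ _ _ _ _ _ h']
        have : τ (α₀ ++ β) a = shiftR α₀ τ β a := rfl
        rw [this, List.append_assoc]
        exact ih (β ++ [Sum.inr a]) _
      · have h' : ¬ (G.Fn a ∧ subStrat σ α₀ β a = JMove.call) := h
        rw [estep_read _ _ _ _ _ _ h, estep_read _ _ _ _ _ _ h', List.append_assoc]
        exact ih (β ++ [Sum.inl a]) _

/-- Once the remaining word is empty, the config is frozen. -/
lemma eplay_frozen (G : CFGame A) (σ : JStrat A) (τ : RStrat A)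
    (c : List (HSym A) × List A) (hc : c.2 = []) (m : ℕ) :
    (estep G σ τ)^[m] c = c := by
  have : estep G σ τ c = c := by
    rcases c with ⟨α, r⟩; simp only at hc; subst hc; rfl
  exact Function.iterate_fixed this m

/-- Concatenation lemma: while the first part is not exhausted, the play on a
concatenation mirrors the play on the first part. -/
lemma eplay_concat (G : CFGame A) (σ : JStrat A) (τ : RStrat A) :
    ∀ (n : ℕ) (α₀ : List (HSym A)) (r₁ r₂ : List A),
      (∀ k < n, ((estep G σ τ)^[k] (α₀, r₁)).2 ≠ []) →
      (estep G σ τ)^[n] (α₀, r₁ ++ r₂) =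
        (((estep G σ τ)^[n] (α₀, r₁)).1, ((estep G σ τ)^[n] (α₀, r₁)).2 ++ r₂) := by
  intro n
  induction n with
  | zero => intro α₀ r₁ r₂ _; simp
  | succ n ih =>
    intro α₀ r₁ r₂ hne
    have h0 : r₁ ≠ [] := by
      have := hne 0 (Nat.succ_pos n); simpa using this
    rcases r₁ with _ | ⟨a, v⟩
    · exact absurd rfl h0
    rw [Function.iterate_succ_apply, Function.iterate_succ_apply]
    by_cases h : G.Fn a ∧ σ α₀ a = JMove.call
    · rw [List.cons_append, estep_call _ _ _ _ _ _ h, estep_call _ _ _ _ _ _ h,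
        ← List.append_assoc]
      exact ih _ _ _ (fun k hk => by
        have := hne (k+1) (Nat.succ_lt_succ hk)
        rwa [Function.iterate_succ_apply, estep_call _ _ _ _ _ _ h] at this)
    · rw [List.cons_append, estep_read _ _ _ _ _ _ h, estep_read _ _ _ _ _ _ h]
      exact ih _ _ _ (fun k hk => by
        have := hne (k+1) (Nat.succ_lt_succ hk)
        rwa [Function.iterate_succ_apply, estep_read _ _ _ _ _ _ h] at this)

/-- Extract a least termination time. -/
lemma exists_min_term (G : CFGame A) (σ : JStrat A) (τ : RStrat A)
    (c : List (HSym A) × List A) (h : ∃ n, ((estep G σ τ)^[n] c).2 = []) :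
    ∃ n, ((estep G σ τ)^[n] c).2 = [] ∧ ∀ k < n, ((estep G σ τ)^[k] c).2 ≠ [] := by
  classical
  exact ⟨Nat.find h, Nat.find_spec h, fun k hk => Nat.find_min h hk⟩

end Aux2

section Aux3

variable {A : Type}

/-- `c` can be produced by calling `b`. -/
def Desc (G : CFGame A) (c b : A) : Prop :=
  G.Fn b ∧ G.Fn c ∧ ∃ v, G.R b v ∧ c ∈ v

lemma transGen_desc_chain (G : CFGame A) {a b : A}
    (h : Relation.TransGen (Desc G) a b) :
    ∃ (n : ℕ) (f : ℕ → A), 1 ≤ n ∧ f 0 = b ∧ f n = a ∧ (∀ i ≤ n, G.Fn (f i)) ∧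
      ∀ k < n, ∃ v, G.R (f k) v ∧ f (k + 1) ∈ v := by
  induction h with
  | @single c hd =>
    refine ⟨1, fun i => if i = 0 then c else a, le_refl 1, by simp, by simp, ?_, ?_⟩
    · intro i hi
      interval_cases i
      · simpa using hd.1
      · simpa using hd.2.1
    · intro k hk
      interval_cases k
      obtain ⟨v, hv1, hv2⟩ := hd.2.2
      exact ⟨v, by simpa using hv1, by simpa using hv2⟩
  | @tail b' c hbc hd ih =>
    obtain ⟨n, f, hn, hf0, hfn, hFn, hstep⟩ := ih
    refine ⟨n + 1, fun i => if i = 0 then c else f (i - 1), le_add_self.trans (le_refl _), by simp, ?_, ?_, ?_⟩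
    · simp [hfn]
    · intro i hi
      rcases Nat.eq_zero_or_pos i with h0 | h0
      · subst h0; simpa using hd.1
      · have : ¬ (i = 0) := Nat.pos_iff_ne_zero.mp h0
        simp only [this, if_false]
        exact hFn (i - 1) (by omega)
    · intro k hk
      rcases Nat.eq_zero_or_pos k with h0 | h0
      · subst h0
        obtain ⟨v, hv1, hv2⟩ := hd.2.2
        refine ⟨v, by simpa using hv1, ?_⟩
        simpa [hf0] using hv2
      · have hk0 : ¬ (k = 0) := Nat.pos_iff_ne_zero.mp h0
        obtain ⟨v, hv1, hv2⟩ := hstep (k - 1) (by omega)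
        refine ⟨v, by simpa [hk0] using hv1, ?_⟩
        have : k + 1 - 1 = (k - 1) + 1 := by omega
        simp only [Nat.succ_ne_zero, if_false, this]
        exact hv2

lemma desc_wf [Fintype A] (G : CFGame A) (hnr : G.NonRecursive) :
    WellFounded (Relation.TransGen (Desc G)) := by
  haveI : IsTrans A (Relation.TransGen (Desc G)) := ⟨fun a b c h1 h2 => h1.trans h2⟩
  haveI : IsIrrefl A (Relation.TransGen (Desc G)) := by
    constructor
    intro a ha
    obtain ⟨n, f, hn, hf0, hfn, hFn, hstep⟩ := transGen_desc_chain G ha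
    exact hnr ⟨n, f, hn, by rw [hf0, hfn], hFn, fun k hk => hstep k hk⟩
  exact Finite.wellFounded_of_trans_of_irrefl _

lemma term_read_single (G : CFGame A) (c : A) (hc : ¬ G.Fn c) (σ : JStrat A)
    (τ : RStrat A) : ∃ n, ((estep G σ τ)^[n] ([], [c])).2 = [] := by
  refine ⟨1, ?_⟩
  rw [Function.iterate_one, estep_read _ _ _ _ _ _ (fun hh => hc hh.1)]

lemma term_list (G : CFGame A) :
    ∀ z : List A,
      (∀ c ∈ z, ∀ (σ : JStrat A) (τ : RStrat A), G.RValid τ →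
        ∃ n, ((estep G σ τ)^[n] ([], [c])).2 = []) →
      ∀ (σ : JStrat A) (τ : RStrat A), G.RValid τ →
        ∃ n, ((estep G σ τ)^[n] ([], z)).2 = [] := by
  intro z
  induction z with
  | nil => intro _ σ τ _; exact ⟨0, rfl⟩
  | cons c r ih =>
    intro hz σ τ hτ
    obtain ⟨n₁, hn₁, hmin⟩ := exists_min_term G σ τ ([], [c])
      (hz c List.mem_cons_self σ τ hτ)
    set h := ((estep G σ τ)^[n₁] ([], [c])).1 with hh
    have hcat : (estep G σ τ)^[n₁] ([], c :: r) = (h, r) := by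
      have := eplay_concat G σ τ n₁ [] [c] r hmin
      rw [show [c] ++ r = c :: r from rfl] at this
      rw [this, hn₁]; simp [hh]
    obtain ⟨m, hm⟩ := ih (fun c' hc' => hz c' (List.mem_cons_of_mem _ hc'))
      (subStrat σ h) (shiftR h τ) (shiftR_valid G h τ hτ)
    refine ⟨m + n₁, ?_⟩
    rw [Function.iterate_add_apply, hcat]
    have : (h, r) = (h ++ ([] : List (HSym A)), r) := by simp
    rw [this, eplay_shift]
    exact hm

lemma term_single [Fintype A] (G : CFGame A) (hnr : G.NonRecursive) :
    ∀ (b : A) (σ : JStrat A) (τ : RStrat A), G.RValid τ →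
      ∃ n, ((estep G σ τ)^[n] ([], [b])).2 = [] := by
  intro b
  induction b using WellFounded.induction (desc_wf G hnr) with
  | _ b ih =>
    intro σ τ hτ
    by_cases hcall : G.Fn b ∧ σ [] b = JMove.call
    · have hR : G.R b (τ [] b) := hτ [] b hcall.1
      have hstep1 : (estep G σ τ) ([], [b]) = ([Sum.inr b], τ [] b) := by
        rw [estep_call _ _ _ _ _ _ hcall, List.append_nil]; rfl
      have hsub : ∀ c ∈ τ [] b, ∀ (σ' : JStrat A) (τ' : RStrat A), G.RValid τ' →
          ∃ n, ((estep G σ' τ')^[n] ([], [c])).2 = [] := by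
        intro c hc σ' τ' hτ'
        by_cases hFc : G.Fn c
        · exact ih c (Relation.TransGen.single ⟨hcall.1, hFc, τ [] b, hR, hc⟩) σ' τ' hτ'
        · exact term_read_single G c hFc σ' τ'
      obtain ⟨m, hm⟩ := term_list G (τ [] b) hsub (subStrat σ [Sum.inr b])
        (shiftR [Sum.inr b] τ) (shiftR_valid G _ τ hτ)
      refine ⟨m + 1, ?_⟩
      rw [Function.iterate_add_apply, Function.iterate_one, hstep1]
      have : ([Sum.inr b], τ [] b) = (([Sum.inr b] : List (HSym A)) ++ [], τ [] b) := by simp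
      rw [this, eplay_shift]
      exact hm
    · refine ⟨1, ?_⟩
      rw [Function.iterate_one, estep_read _ _ _ _ _ _ hcall]

lemma term_all [Fintype A] (G : CFGame A) (hnr : G.NonRecursive)
    (z : List A) (σ : JStrat A) (τ : RStrat A) (hτ : G.RValid τ) :
    ∃ n, ((estep G σ τ)^[n] ([], z)).2 = [] :=
  term_list G z (fun c _ => term_single G hnr c) σ τ hτ

end Aux3

section Aux4

variable {A : Type}

lemma flat_append (α β : List (HSym A)) : flat (α ++ β) = flat α ++ flat β :=
  List.filterMap_append

lemma flat_inl (u : List A) : flat (u.map Sum.inl) = u := by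
  induction u with
  | nil => rfl
  | cons a u ih => simpa [flat, List.filterMap_cons] using ih

lemma flat_inl_singleton (a : A) : flat [Sum.inl a] = [a] := rfl

lemma flat_inr_singleton (a : A) : flat [Sum.inr a] = ([] : List A) := rfl

lemma exists_valid (G : CFGame A) : ∃ τ : RStrat A, G.RValid τ := by
  classical
  refine ⟨fun _ a => if h : G.Fn a then h.choose else [], fun α a ha => ?_⟩
  simp only [dif_pos ha]
  exact ha.choose_spec

lemma ewin_nil (G : CFGame A) (q : G.Q) (h : EWin G q []) : q ∈ G.T.accept := by
  obtain ⟨σ, hσ⟩ := h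
  obtain ⟨τ, hτ⟩ := exists_valid G
  obtain ⟨n, _, hacc⟩ := hσ τ hτ
  have : (estep G σ τ)^[n] ([], ([] : List A)) = ([], []) :=
    eplay_frozen G σ τ ([], []) rfl n
  rw [eplay, this] at hacc
  simpa [flat] using hacc

lemma read_run (G : CFGame A) (σ : JStrat A) (m : ℕ)
    (Hread : ∀ (α : List (HSym A)) (c : A), α.length < m → σ α c = JMove.read) :
    ∀ (suf pre v : List A) (τ : RStrat A), pre.length + suf.length ≤ m →
      (estep G σ τ)^[suf.length] (pre.map Sum.inl, suf ++ v) =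
        ((pre ++ suf).map Sum.inl, v) := by
  intro suf
  induction suf with
  | nil => intro pre v τ _; simp
  | cons c suf' ih =>
    intro pre v τ hlen
    have hread : σ (pre.map Sum.inl) c = JMove.read := by
      apply Hread
      simp only [List.length_map]
      simp only [List.length_cons] at hlen
      omega
    have hg : ¬ (G.Fn c ∧ σ (pre.map Sum.inl) c = JMove.call) := by
      rintro ⟨-, hc⟩; rw [hread] at hc; exact JMove.noConfusion hc
    have hstep : estep G σ τ (pre.map Sum.inl, (c :: suf') ++ v) =
        ((pre ++ [c]).map Sum.inl, suf' ++ v) := by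
      rw [List.cons_append, estep_read _ _ _ _ _ _ hg]
      simp
    rw [show (c :: suf').length = suf'.length + 1 from rfl,
      Function.iterate_succ_apply, hstep]
    have := ih (pre ++ [c]) v τ (by
      simp only [List.length_cons] at hlen
      simp only [List.length_append, List.length_singleton]
      omega)
    rw [this, List.append_assoc]
    rfl

lemma ewin_prepend (G : CFGame A) (q : G.Q) (u v : List A)
    (h : EWin G (G.T.evalFrom q u) v) : EWin G q (u ++ v) := by
  classical
  obtain ⟨ρ, hρ⟩ := h
  refine ⟨fun α c => if α.length < u.length then JMove.read else ρ (α.drop u.length) c,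
    fun τ hτ => ?_⟩
  set σ₁ : JStrat A := fun α c =>
    if α.length < u.length then JMove.read else ρ (α.drop u.length) c with hσ₁
  have hrun : (estep G σ₁ τ)^[u.length] ([], u ++ v) = (u.map Sum.inl, v) := by
    have := read_run G σ₁ u.length
      (fun α c hc => by simp only [hσ₁, if_pos hc]) u [] v τ (by simp)
    simpa using this
  have hsub : subStrat σ₁ (u.map Sum.inl) = ρ := by
    funext β c
    have h1 : ¬ ((u.map Sum.inl ++ β).length < u.length) := by
      simp only [List.length_append, List.length_map]; omega
    simp only [subStrat, hσ₁, if_neg h1]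
    congr 1
    rw [List.drop_append_of_le_length (by simp)]
    simp
  obtain ⟨n, hterm, hacc⟩ := hρ (shiftR (u.map Sum.inl) τ) (shiftR_valid G _ τ hτ)
  refine ⟨n + u.length, ?_, ?_⟩
  · rw [eplay, Function.iterate_add_apply, hrun,
      show (u.map Sum.inl, v) = ((u.map Sum.inl) ++ [], v) by simp, eplay_shift, hsub]
    exact hterm
  · rw [eplay, Function.iterate_add_apply, hrun,
      show (u.map Sum.inl, v) = ((u.map Sum.inl) ++ [], v) by simp, eplay_shift, hsub]
    simp only [flat_append, flat_inl]
    rw [DFA.evalFrom_of_append]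
    exact hacc

end Aux4

section Aux5

variable {A : Type}

/-- Calling `b` at state `q` is safe: it preserves winnability in every context. -/
def CallSafe (G : CFGame A) (q : G.Q) (b : A) : Prop :=
  G.Fn b ∧ ∀ z x, EWin G q (b :: z) → G.R b x → EWin G q (x ++ z)

lemma ewin_wd (G : CFGame A) (σd : JStrat A) (hd : G.Dominant σd) (w : List A)
    (h : EWin G G.T.start w) : EWins G G.T.start σd w := by
  obtain ⟨σ', h'⟩ := h
  have h1 : G.WinsOn σ' w := (winsOn_iff_eWins G σ' w).mpr h'
  have h2 : w ∈ G.W σd := hd σ' h1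
  exact (winsOn_iff_eWins G σd w).mp h2

lemma rem_empty_mono (G : CFGame A) (σ : JStrat A) (τ : RStrat A)
    (c : List (HSym A) × List A) {k n : ℕ} (hkn : k ≤ n)
    (h : ((estep G σ τ)^[k] c).2 = []) : ((estep G σ τ)^[n] c).2 = [] := by
  have h2 := eplay_frozen G σ τ ((estep G σ τ)^[k] c) h (n - k)
  rw [← Function.iterate_add_apply, Nat.sub_add_cancel hkn] at h2
  rw [h2]; exact h

/-- The kill lemma: if `σd` is dominant, reads through `y`, but calls `b` at the
history `y` while a killer context exists, we get a contradiction. -/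
lemma kill (G : CFGame A) (σd : JStrat A) (hd : G.Dominant σd) (y : List A)
    (hforce : ∀ (v : List A) (τ : RStrat A), G.RValid τ →
      (estep G σd τ)^[y.length] ([], y ++ v) = (y.map Sum.inl, v))
    (b : A) (z x : List A)
    (hwin : EWin G (G.T.evalFrom G.T.start y) (b :: z))
    (hRx : G.R b x)
    (hnw : ¬ EWin G (G.T.evalFrom G.T.start y) (x ++ z))
    (hcall : G.Fn b ∧ σd (y.map Sum.inl) b = JMove.call) : False := by
  classical
  set p := G.T.evalFrom G.T.start y with hp
  have hw3 : EWins G G.T.start σd (y ++ b :: z) :=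
    ewin_wd G σd hd _ (ewin_prepend G _ y (b :: z) hwin)
  set ρ₀ : JStrat A := subStrat σd (y.map Sum.inl ++ [Sum.inr b]) with hρ₀
  have hnEW : ¬ EWins G p ρ₀ (x ++ z) := fun hE => hnw ⟨ρ₀, hE⟩
  rw [EWins] at hnEW
  push_neg at hnEW
  obtain ⟨τb, hτb, hbeat⟩ := hnEW
  set τ₃ : RStrat A := fun β cc =>
    if β = y.map Sum.inl ∧ cc = b then x else τb (β.drop (y.length + 1)) cc with hτ₃
  have hτ₃v : G.RValid τ₃ := by
    intro β a ha
    by_cases hcase : β = y.map Sum.inl ∧ a = b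
    · simp only [hτ₃, if_pos hcase]
      rw [hcase.2]; exact hRx
    · simp only [hτ₃, if_neg hcase]
      exact hτb _ a ha
  obtain ⟨N, hterm, hacc⟩ := hw3 τ₃ hτ₃v
  have hplay1 : (estep G σd τ₃)^[y.length] ([], y ++ b :: z) = (y.map Sum.inl, b :: z) :=
    hforce (b :: z) τ₃ hτ₃v
  have hplay2 : (estep G σd τ₃)^[y.length + 1] ([], y ++ b :: z) =
      (y.map Sum.inl ++ [Sum.inr b], x ++ z) := by
    rw [Function.iterate_succ_apply', hplay1, estep_call _ _ _ _ _ _ hcall]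
    congr 2
    simp [hτ₃]
  have hN : y.length + 1 < N := by
    by_contra hle
    push_neg at hle
    have := rem_empty_mono G σd τ₃ ([], y ++ b :: z) hle hterm
    rw [eplay] at hterm
    rw [hplay2] at this
    simp only at this
    exact (G.R_ne b x hRx) (by
      rcases x with _ | ⟨a, x'⟩
      · rfl
      · exact absurd this (by simp))
  set m := N - (y.length + 1) with hm
  have hNm : N = m + (y.length + 1) := by omega
  have hshift : shiftR (y.map Sum.inl ++ [Sum.inr b]) τ₃ = τb := by
    funext β cc
    have h1 : ¬ ((y.map Sum.inl ++ [Sum.inr b]) ++ β = y.map Sum.inl ∧ cc = b) := by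
      rintro ⟨h1, -⟩
      have := congrArg List.length h1
      simp at this
    simp only [shiftR, hτ₃, if_neg h1]
    congr 1
    rw [List.drop_append_of_le_length (by simp)]
    simp
  have hdecomp : (estep G σd τ₃)^[N] ([], y ++ b :: z) =
      ((y.map Sum.inl ++ [Sum.inr b]) ++
        ((estep G ρ₀ τb)^[m] ([], x ++ z)).1,
        ((estep G ρ₀ τb)^[m] ([], x ++ z)).2) := by
    rw [hNm, Function.iterate_add_apply, hplay2,
      show ((y.map Sum.inl ++ [Sum.inr b], x ++ z) : List (HSym A) × List A) =
        ((y.map Sum.inl ++ [Sum.inr b]) ++ [], x ++ z) by simp,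
      eplay_shift, hshift, hρ₀]
  have hterm' : (eplay G ρ₀ τb (x ++ z) m).2 = [] := by
    rw [eplay] at hterm ⊢
    rw [hdecomp] at hterm
    exact hterm
  refine hbeat m hterm' ?_
  rw [eplay] at hacc ⊢
  rw [hdecomp] at hacc
  rw [flat_append, flat_append, flat_inl] at hacc
  rw [show flat [Sum.inr b] = ([] : List A) from rfl, List.append_nil] at hacc
  rw [DFA.evalFrom_of_append] at hacc
  exact hacc

/-- Forced reading: the dominant strategy must read through any word whose
symbols were read at call-unsafe pairs. -/
lemma forced_read (G : CFGame A) (σd : JStrat A) (hd : G.Dominant σd) :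
    ∀ (y : List A),
      (∀ y₁ c y₂, y = y₁ ++ c :: y₂ → ¬ CallSafe G (G.T.evalFrom G.T.start y₁) c) →
      ∀ (v : List A) (τ : RStrat A), G.RValid τ →
        (estep G σd τ)^[y.length] ([], y ++ v) = (y.map Sum.inl, v) := by
  intro y
  induction y using List.reverseRecOn with
  | nil => intro _ v τ _; simp
  | append_singleton y₀ c ih =>
    intro hsplit v τ hτ
    have hsplit₀ : ∀ y₁ c' y₂, y₀ = y₁ ++ c' :: y₂ →
        ¬ CallSafe G (G.T.evalFrom G.T.start y₁) c' := by
      intro y₁ c' y₂ he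
      exact hsplit y₁ c' (y₂ ++ [c]) (by rw [he]; simp)
    have hforce₀ := ih hsplit₀
    have hplay₀ : (estep G σd τ)^[y₀.length] ([], (y₀ ++ [c]) ++ v) =
        (y₀.map Sum.inl, c :: v) := by
      rw [List.append_assoc, List.singleton_append]
      exact hforce₀ (c :: v) τ hτ
    have hread : ¬ (G.Fn c ∧ σd (y₀.map Sum.inl) c = JMove.call) := by
      rintro hcall
      have hns := hsplit y₀ c [] (by simp)
      rw [CallSafe] at hns
      push_neg at hns
      obtain ⟨z, x, hwz, hRx, hnx⟩ := hns hcall.1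
      exact kill G σd hd y₀ hforce₀ c z x hwz hRx hnx hcall
    have : (y₀ ++ [c]).length = y₀.length + 1 := by simp
    rw [this, Function.iterate_succ_apply', hplay₀, estep_read _ _ _ _ _ _ hread]
    simp

/-- The staging lemma: at a forced configuration, if calling is unsafe then
reading preserves winnability. -/
lemma staging (G : CFGame A) (σd : JStrat A) (hd : G.Dominant σd) (y : List A)
    (hsplit : ∀ y₁ c y₂, y = y₁ ++ c :: y₂ → ¬ CallSafe G (G.T.evalFrom G.T.start y₁) c)
    (b : A) (r : List A)
    (hwin : EWin G (G.T.evalFrom G.T.start y) (b :: r))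
    (hns : ¬ CallSafe G (G.T.evalFrom G.T.start y) b) :
    EWin G (G.T.evalFrom G.T.start (y ++ [b])) r := by
  classical
  set q := G.T.evalFrom G.T.start y with hq
  have hqb : G.T.evalFrom G.T.start (y ++ [b]) = G.T.step q b := by
    rw [DFA.evalFrom_append_singleton]
  rw [hqb]
  by_cases hFb : G.Fn b
  · -- function symbol: killer context exists
    rw [CallSafe] at hns
    push_neg at hns
    obtain ⟨z, x, hwz, hRx, hnx⟩ := hns hFb
    have hforce := forced_read G σd hd y hsplit
    by_cases hc : σd (y.map Sum.inl) b = JMove.call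
    · exact absurd (kill G σd hd y hforce b z x hwz hRx hnx ⟨hFb, hc⟩) (fun h => h)
    · -- σd reads b at the forced history
      have hg : ¬ (G.Fn b ∧ σd (y.map Sum.inl) b = JMove.call) := fun h => hc h.2
      have hw1 : EWins G G.T.start σd (y ++ b :: r) :=
        ewin_wd G σd hd _ (ewin_prepend G _ y (b :: r) hwin)
      refine ⟨subStrat σd ((y ++ [b]).map Sum.inl), fun τ' hτ' => ?_⟩
      set τ : RStrat A := fun β cc => τ' (β.drop (y.length + 1)) cc with hτdef
      have hτv : G.RValid τ := fun β a ha => hτ' _ a ha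
      obtain ⟨N, hterm, hacc⟩ := hw1 τ hτv
      have hplay1 : (estep G σd τ)^[y.length] ([], y ++ b :: r) = (y.map Sum.inl, b :: r) :=
        hforce (b :: r) τ hτv
      have hplay2 : (estep G σd τ)^[y.length + 1] ([], y ++ b :: r) =
          ((y ++ [b]).map Sum.inl, r) := by
        rw [Function.iterate_succ_apply', hplay1, estep_read _ _ _ _ _ _ hg]
        simp
      have hN : y.length + 1 ≤ N := by
        by_contra hle
        push_neg at hle
        have hle' : N ≤ y.length := by omega
        have := rem_empty_mono G σd τ ([], y ++ b :: r) hle' hterm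
        rw [hplay1] at this
        exact absurd this (by simp)
      set m := N - (y.length + 1) with hm
      have hNm : N = m + (y.length + 1) := by omega
      have hshift : shiftR ((y ++ [b]).map Sum.inl) τ = τ' := by
        funext β cc
        simp only [shiftR, hτdef]
        congr 1
        rw [List.drop_append_of_le_length (by simp)]
        simp
      have hdecomp : (estep G σd τ)^[N] ([], y ++ b :: r) =
          (((y ++ [b]).map Sum.inl) ++
            ((estep G (subStrat σd ((y ++ [b]).map Sum.inl)) τ')^[m] ([], r)).1,
            ((estep G (subStrat σd ((y ++ [b]).map Sum.inl)) τ')^[m] ([], r)).2) := by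
        rw [hNm, Function.iterate_add_apply, hplay2,
          show (((y ++ [b]).map Sum.inl, r) : List (HSym A) × List A) =
            (((y ++ [b]).map Sum.inl) ++ [], r) by simp,
          eplay_shift, hshift]
      refine ⟨m, ?_, ?_⟩
      · rw [eplay] at hterm ⊢
        rw [hdecomp] at hterm
        exact hterm
      · rw [eplay] at hacc ⊢
        rw [hdecomp, flat_append, flat_inl, DFA.evalFrom_of_append,
          DFA.evalFrom_append_singleton] at hacc
        exact hacc
  · -- not a function symbol: any winner must read it
    obtain ⟨σ₁, hσ₁⟩ := hwin
    refine ⟨subStrat σ₁ [Sum.inl b], fun τ' hτ' => ?_⟩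
    set τ : RStrat A := fun β cc => τ' (β.drop 1) cc with hτdef
    have hτv : G.RValid τ := fun β a ha => hτ' _ a ha
    obtain ⟨n, hterm, hacc⟩ := hσ₁ τ hτv
    have hg : ¬ (G.Fn b ∧ σ₁ [] b = JMove.call) := fun h => hFb h.1
    have hstep1 : estep G σ₁ τ ([], b :: r) = ([Sum.inl b], r) := by
      rw [estep_read _ _ _ _ _ _ hg]; rfl
    rcases n with _ | m
    · exact absurd hterm (by simp [eplay])
    have hshift : shiftR [Sum.inl b] τ = τ' := by
      funext β cc
      simp only [shiftR, hτdef]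
      rfl
    have hdecomp : (estep G σ₁ τ)^[m + 1] ([], b :: r) =
        (([Sum.inl b] : List (HSym A)) ++
          ((estep G (subStrat σ₁ [Sum.inl b]) τ')^[m] ([], r)).1,
          ((estep G (subStrat σ₁ [Sum.inl b]) τ')^[m] ([], r)).2) := by
      rw [Function.iterate_succ_apply, hstep1,
        show (([Sum.inl b] : List (HSym A)), r) =
          (([Sum.inl b] : List (HSym A)) ++ [], r) by simp,
        eplay_shift, hshift]
    refine ⟨m, ?_, ?_⟩
    · rw [eplay] at hterm ⊢
      rw [hdecomp] at hterm
      exact hterm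
    · rw [eplay] at hacc ⊢
      rw [hdecomp, flat_append] at hacc
      rw [show flat [Sum.inl b] = [b] from rfl] at hacc
      rw [DFA.evalFrom_of_append] at hacc
      rw [show G.T.evalFrom q [b] = G.T.step q b from DFA.evalFrom_singleton _ _ _] at hacc
      exact hacc

end Aux5

section Aux6

variable {A : Type}

open Classical in
/-- The strategy automaton transitions: reroute to `Call` exactly at call-safe pairs. -/
noncomputable def deltaA (G : CFGame A) : G.Q → A → Option G.Q :=
  fun q b => if CallSafe G q b then none else some (G.T.step q b)

open Classical in
/-- The strongly regular candidate strategy. -/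
noncomputable def sigmaStar (G : CFGame A) : JStrat A :=
  fun α b =>
    if List.foldl (optStep (deltaA G)) (some G.T.start) (flat α ++ [b]) = none then
      JMove.call
    else JMove.read

lemma sigmaStar_SR (G : CFGame A) : G.StronglyRegular (sigmaStar G) := by
  classical
  refine ⟨deltaA G, fun q a => ?_, fun α a _ => ?_⟩
  · by_cases h : CallSafe G q a
    · right; simp [deltaA, h]
    · left; simp [deltaA, h]
  · unfold sigmaStar
    by_cases h : List.foldl (optStep (deltaA G)) (some G.T.start) (flat α ++ [a]) = none
    · simp [h]
    · simp [h]

lemma append_singleton_split {l l₁ l₂ : List A} {x c : A}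
    (h : l ++ [x] = l₁ ++ c :: l₂) :
    (l₁ = l ∧ c = x) ∨ ∃ l₂', l₂ = l₂' ++ [x] ∧ l = l₁ ++ c :: l₂' := by
  rcases List.eq_nil_or_concat l₂ with rfl | ⟨l₂', x', rfl⟩
  · obtain ⟨h1, h2⟩ := List.append_inj' h rfl
    left
    exact ⟨h1.symm, by simpa using h2.symm⟩
  · rw [List.concat_eq_append] at h
    have h' : l ++ [x] = (l₁ ++ c :: l₂') ++ [x'] := by rw [h]; simp
    obtain ⟨h1, h2⟩ := List.append_inj' h' rfl
    have hx : x = x' := by simpa using h2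
    right
    exact ⟨l₂', by rw [List.concat_eq_append, hx], h1⟩

lemma main_win [Fintype A] (G : CFGame A) (hnr : G.NonRecursive)
    (σd : JStrat A) (hd : G.Dominant σd) (w : List A)
    (hw : EWins G G.T.start σd w) : EWins G G.T.start (sigmaStar G) w := by
  classical
  intro τ hτ
  obtain ⟨n₀, hn₀⟩ := term_all G hnr w (sigmaStar G) τ hτ
  set F := estep G (sigmaStar G) τ with hF
  -- the invariant
  have hJ : ∀ n : ℕ,
      List.foldl (optStep (deltaA G)) (some G.T.start) (flat (F^[n] ([], w)).1) =
        some (G.T.evalFrom G.T.start (flat (F^[n] ([], w)).1)) ∧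
      (∀ y₁ c y₂, flat (F^[n] ([], w)).1 = y₁ ++ c :: y₂ →
        ¬ CallSafe G (G.T.evalFrom G.T.start y₁) c) ∧
      EWin G (G.T.evalFrom G.T.start (flat (F^[n] ([], w)).1)) (F^[n] ([], w)).2 := by
    intro n
    induction n with
    | zero =>
      refine ⟨by simp [flat], ?_, ?_⟩
      · intro y₁ c y₂ hy
        simp only [Function.iterate_zero_apply] at hy
        exact absurd hy.symm (by simp [flat])
      · simpa [flat] using ⟨σd, hw⟩
    | succ n ih =>
      obtain ⟨J1, J2, J3⟩ := ih
      rw [Function.iterate_succ_apply']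
      rcases hrem : (F^[n] ([], w)).2 with _ | ⟨a, r⟩
      · have hfix : F (F^[n] ([], w)) = F^[n] ([], w) := by
          rcases hc : F^[n] ([], w) with ⟨α, rr⟩
          rw [hc] at hrem
          simp only at hrem
          subst hrem
          rfl
        rw [hfix]
        exact ⟨J1, J2, J3⟩
      · set α := (F^[n] ([], w)).1 with hα
        set y := flat α with hy
        set q := G.T.evalFrom G.T.start y with hqdef
        have hcfg : F^[n] ([], w) = (α, a :: r) := by
          rw [hα, ← hrem]
        have hkey : sigmaStar G α a = JMove.call ↔ CallSafe G q a := by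
          unfold sigmaStar
          rw [List.foldl_append]
          rw [← hy, J1]
          simp only [List.foldl_cons, List.foldl_nil]
          have hthis : optStep (deltaA G) (some q) a = deltaA G q a := rfl
          simp only [hthis]
          by_cases h : CallSafe G q a
          · simp [deltaA, h]
          · simp [deltaA, h]
        by_cases hcs : CallSafe G q a
        · -- call step
          have hguard : G.Fn a ∧ sigmaStar G α a = JMove.call := ⟨hcs.1, hkey.mpr hcs⟩
          rw [hcfg, hF, estep_call _ _ _ _ _ _ hguard]
          have hflat : flat (α ++ [Sum.inr a]) = y := by
            rw [flat_append, hy]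
            simp [flat]
          refine ⟨by rw [hflat, ← hqdef]; exact J1, ?_, ?_⟩
          · intro y₁ c y₂ hsp
            rw [hflat] at hsp
            exact J2 y₁ c y₂ hsp
          · rw [hflat, ← hqdef]
            have hwr : EWin G q (a :: r) := by
              have := J3
              rw [hrem] at this
              exact this
            exact hcs.2 r (τ α a) hwr (hτ α a hcs.1)
        · -- read step
          have hguard : ¬ (G.Fn a ∧ sigmaStar G α a = JMove.call) := fun h =>
            hcs (hkey.mp h.2)
          rw [hcfg, hF, estep_read _ _ _ _ _ _ hguard]
          have hflat : flat (α ++ [Sum.inl a]) = y ++ [a] := by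
            rw [flat_append, hy]
            rfl
          have hJ2' : ∀ y₁ c y₂, y = y₁ ++ c :: y₂ →
              ¬ CallSafe G (G.T.evalFrom G.T.start y₁) c := by
            intro y₁ c y₂ hsp
            exact J2 y₁ c y₂ hsp
          refine ⟨?_, ?_, ?_⟩
          · rw [hflat, List.foldl_append, J1]
            simp only [List.foldl_cons, List.foldl_nil]
            have h1 : optStep (deltaA G) (some q) a = deltaA G q a := rfl
            rw [h1, DFA.evalFrom_append_singleton, ← hqdef]
            simp [deltaA, hcs]
          · intro y₁ c y₂ hsp
            rw [hflat] at hsp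
            rcases append_singleton_split hsp with ⟨h1, h2⟩ | ⟨l₂', _, h2⟩
            · subst h1; subst h2
              rw [← hqdef]
              exact hcs
            · exact hJ2' y₁ c l₂' h2
          · rw [hflat]
            have hwr : EWin G q (a :: r) := by
              have := J3
              rw [hrem] at this
              exact this
            have := staging G σd hd y hJ2' a r (by rw [← hqdef]; exact hwr)
              (by rw [← hqdef]; exact hcs)
            exact this
  obtain ⟨J1, J2, J3⟩ := hJ n₀
  refine ⟨n₀, hn₀, ?_⟩
  have : (F^[n₀] ([], w)).2 = [] := hn₀
  rw [this] at J3
  exact ewin_nil G _ J3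

end Aux6

theorem statement5 {A : Type} [Fintype A] (G : CFGame A)
    (hnr : G.NonRecursive)
    (hdom : ∃ σ : JStrat A, G.Dominant σ) :
    ∃ σ : JStrat A, G.StronglyRegular σ ∧ G.Dominant σ := by
  obtain ⟨σd, hd⟩ := hdom
  refine ⟨sigmaStar G, sigmaStar_SR G, ?_⟩
  intro σ' w hw'
  have h1 : w ∈ G.W σd := hd σ' hw'
  have h2 : EWins G G.T.start σd w := (winsOn_iff_eWins G σd w).mp h1
  have h3 := main_win G hnr σd hd w h2
  exact (winsOn_iff_eWins G (sigmaStar G) w).mpr h3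

end CFG
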